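/- Let X be a real Banach space, τ > 0, t ∈ ℝ, and let f : ℝ → X be twice continuously differentiable on [t − τ, t + τ/2]. Then ‖(3/2)·f(t) − (1/2)·f(t − τ) − f(t + τ/2)‖² ≤ τ³ · ∫_{t−τ}^{t+τ/2} ‖f''(s)‖² ds. -/

import Mathlib

open intervalIntegral MeasureTheory Set

/-- Cauchy–Schwarz (crude form) for interval integrals of nonnegative continuous
functions. -/
lemma cs_aux {a b : ℝ} (hab : a ≤ b) {g : ℝ → ℝ}
    (hg : ContinuousOn g (Set.Icc a b)) (hnn : ∀ x ∈ Set.Icc a b, 0 ≤ g x) :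
    (∫ x in a..b, g x) ^ 2 ≤ (b - a) * ∫ x in a..b, (g x) ^ 2 := by
  have huIcc : Set.uIcc a b = Set.Icc a b := Set.uIcc_of_le hab
  have hgint : IntervalIntegrable g volume a b :=
    (huIcc ▸ hg : ContinuousOn g (Set.uIcc a b)).intervalIntegrable
  have hg2 : ContinuousOn (fun x => (g x) ^ 2) (Set.Icc a b) := hg.pow 2
  have hg2int : IntervalIntegrable (fun x => (g x) ^ 2) volume a b :=
    (huIcc ▸ hg2 : ContinuousOn _ (Set.uIcc a b)).intervalIntegrable
  set A := ∫ x in a..b, g x with hA_def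
  set I := ∫ x in a..b, (g x) ^ 2 with hI_def
  have hA : 0 ≤ A :=
    intervalIntegral.integral_nonneg hab (fun x hx => hnn x hx)
  have hI : 0 ≤ I :=
    intervalIntegral.integral_nonneg hab (fun x hx => sq_nonneg _)
  have hL : 0 ≤ b - a := sub_nonneg.mpr hab
  have key : ∀ ε : ℝ, 0 < ε → A ≤ (b - a) * (ε / 2) + (1 / (2 * ε)) * I := by
    intro ε hε
    have h2 : (0:ℝ) < 2 * ε := by linarith
    have hmono : A ≤ ∫ x in a..b, (ε / 2 + (1 / (2 * ε)) * (g x) ^ 2) := by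
      refine intervalIntegral.integral_mono_on hab hgint ?_ ?_
      · exact (_root_.intervalIntegrable_const).add (hg2int.const_mul _)
      · intro x hx
        rw [show ε / 2 + 1 / (2 * ε) * g x ^ 2 = (ε * ε + g x ^ 2) / (2 * ε) by
          field_simp, le_div_iff₀ h2]
        nlinarith [sq_nonneg (g x - ε)]
    have hcalc : (∫ x in a..b, (ε / 2 + (1 / (2 * ε)) * (g x) ^ 2))
        = (b - a) * (ε / 2) + (1 / (2 * ε)) * I := by
      rw [intervalIntegral.integral_add _root_.intervalIntegrable_const (hg2int.const_mul _),
        intervalIntegral.integral_const, intervalIntegral.integral_const_mul]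
      simp [smul_eq_mul]
      exact Or.inl hI_def.symm
    rw [hcalc] at hmono
    exact hmono
  rcases eq_or_lt_of_le hL with hL0 | hLpos
  · have hab2 : a = b := by linarith
    have hA0 : A = 0 := by
      rw [hA_def, hab2, intervalIntegral.integral_same]
    rw [hA0]
    simpa using mul_nonneg hL hI
  · rcases eq_or_lt_of_le hI with hI0 | hIpos
    · have hA0 : A ≤ 0 := by
        by_contra h
        push_neg at h
        have hk := key (A / (b - a)) (div_pos h hLpos)
        rw [← hI0, mul_zero, add_zero] at hk
        have he : (b - a) * (A / (b - a) / 2) = A / 2 := by field_simp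
        rw [he] at hk
        linarith
      have hA0' : A = 0 := le_antisymm hA0 hA
      rw [hA0']
      simpa using mul_nonneg hL hI
    · set ε := Real.sqrt (I / (b - a)) with hε_def
      have hεpos : 0 < ε := Real.sqrt_pos.mpr (div_pos hIpos hLpos)
      have hε2 : ε ^ 2 = I / (b - a) :=
        Real.sq_sqrt (le_of_lt (div_pos hIpos hLpos))
      have h2 : (b - a) * ε ^ 2 = I := by
        rw [hε2]; field_simp
      have h3 : (1 / (2 * ε)) * I = (b - a) * (ε / 2) := by
        rw [← h2]; field_simp
      have h1 := key ε hεpos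
      rw [h3] at h1
      nlinarith [h1, hA, hεpos.le, h2, hLpos.le]

theorem stmt_10 {X : Type*} [NormedAddCommGroup X] [NormedSpace ℝ X] [CompleteSpace X]
    (τ t : ℝ) (hτ : 0 < τ) (f f' f'' : ℝ → X)
    (hf' : ∀ s ∈ Set.Icc (t - τ) (t + τ/2),
      HasDerivWithinAt f (f' s) (Set.Icc (t - τ) (t + τ/2)) s)
    (hf'' : ∀ s ∈ Set.Icc (t - τ) (t + τ/2),
      HasDerivWithinAt f' (f'' s) (Set.Icc (t - τ) (t + τ/2)) s)
    (hcont : ContinuousOn f'' (Set.Icc (t - τ) (t + τ/2))) :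
    ‖(3/2 : ℝ) • f t - (1/2 : ℝ) • f (t - τ) - f (t + τ/2)‖^2 ≤
      τ^3 * ∫ s in (t - τ)..(t + τ/2), ‖f'' s‖^2 := by
  set a := t - τ with ha_def
  set b := t + τ/2 with hb_def
  have hab : a ≤ b := by rw [ha_def, hb_def]; linarith
  have haT : a ≤ t := by rw [ha_def]; linarith
  have htB : t ≤ b := by rw [hb_def]; linarith
  have htS : t ∈ Set.Icc a b := ⟨haT, htB⟩
  have haS : a ∈ Set.Icc a b := ⟨le_refl a, hab⟩
  have hbS : b ∈ Set.Icc a b := ⟨hab, le_refl b⟩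
  -- general FTC helper
  have ftc : ∀ (F F' : ℝ → X),
      (∀ s ∈ Set.Icc a b, HasDerivWithinAt F (F' s) (Set.Icc a b) s) →
      ContinuousOn F' (Set.Icc a b) →
      ∀ x ∈ Set.Icc a b, ∀ y ∈ Set.Icc a b,
        ∫ u in x..y, F' u = F y - F x := by
    intro F F' hF hF' x hx y hy
    have hsub : Set.uIcc x y ⊆ Set.Icc a b := Set.uIcc_subset_Icc hx hy
    refine intervalIntegral.integral_eq_sub_of_hasDeriv_right
      (fun s hs => ((hF s (hsub hs)).continuousWithinAt).mono hsub) ?_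
      ((hF'.mono hsub).intervalIntegrable)
    intro z hz
    have hzb : z < b := lt_of_lt_of_le hz.2 (max_le hx.2 hy.2)
    have hza : a ≤ z := le_trans (le_min hx.1 hy.1) (le_of_lt hz.1)
    have hzS : z ∈ Set.Icc a b := ⟨hza, hzb.le⟩
    have hmem : Set.Icc a b ∈ nhdsWithin z (Set.Ioi z) := by
      refine Filter.mem_of_superset (Ioc_mem_nhdsGT_of_mem ⟨le_refl z, hzb⟩) ?_
      intro u hu
      exact ⟨le_trans hzS.1 hu.1.le, hu.2⟩
    exact (hF z hzS).mono_of_mem_nhdsWithin hmem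
  -- continuity of f'
  have hf'cont : ContinuousOn f' (Set.Icc a b) :=
    fun s hs => (hf'' s hs).continuousWithinAt
  -- squared-norm integral
  set J := ∫ s in a..b, ‖f'' s‖ ^ 2 with hJ_def
  have hJnn : 0 ≤ J :=
    intervalIntegral.integral_nonneg hab (fun x _ => sq_nonneg _)
  -- key pointwise bound on g y := f' y - f' t
  have hnormcont : ContinuousOn (fun u => ‖f'' u‖) (Set.Icc a b) := hcont.norm
  have hkey : ∀ y ∈ Set.Icc a b, ‖f' y - f' t‖ ≤ Real.sqrt (τ * J) := by
    intro y hy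
    have hFTC : ∫ u in t..y, f'' u = f' y - f' t := ftc f' f'' hf'' hcont t htS y hy
    rw [← hFTC]
    have h1 : ‖∫ u in t..y, f'' u‖ ≤ |∫ u in t..y, ‖f'' u‖| :=
      intervalIntegral.norm_integral_le_abs_integral_norm
    -- bound |∫ t..y ‖f''‖| by sqrt(τ J)
    have hsq : (∫ u in t..y, ‖f'' u‖) ^ 2 ≤ τ * J := by
      rcases le_total t y with hty | hyt
      · have hmono : ContinuousOn (fun u => ‖f'' u‖) (Set.Icc t y) :=
          hnormcont.mono (Set.Icc_subset_Icc haT hy.2)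
        have := cs_aux hty hmono (fun x _ => norm_nonneg _)
        refine this.trans ?_
        have hsub : (∫ x in t..y, ‖f'' x‖ ^ 2) ≤ J := by
          refine intervalIntegral.integral_mono_interval haT hty hy.2
            (Filter.Eventually.of_forall fun x => sq_nonneg _) ?_
          exact ((Set.uIcc_of_le hab ▸ (hnormcont.pow 2)) :
            ContinuousOn _ (Set.uIcc a b)).intervalIntegrable
        have hlen : y - t ≤ τ := by
          have := hy.2
          rw [hb_def] at this
          linarith
        have hint_nn : 0 ≤ ∫ x in t..y, ‖f'' x‖ ^ 2 :=
          intervalIntegral.integral_nonneg hty (fun x _ => sq_nonneg _)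
        nlinarith
      · rw [intervalIntegral.integral_symm]
        rw [neg_pow]
        have hmono : ContinuousOn (fun u => ‖f'' u‖) (Set.Icc y t) :=
          hnormcont.mono (Set.Icc_subset_Icc hy.1 htB)
        have := cs_aux hyt hmono (fun x _ => norm_nonneg _)
        have h2 : ((-1 : ℝ)) ^ 2 * (∫ x in y..t, ‖f'' x‖) ^ 2
            = (∫ x in y..t, ‖f'' x‖) ^ 2 := by ring
        rw [h2]
        refine this.trans ?_
        have hsub : (∫ x in y..t, ‖f'' x‖ ^ 2) ≤ J := by
          refine intervalIntegral.integral_mono_interval hy.1 hyt htB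
            (Filter.Eventually.of_forall fun x => sq_nonneg _) ?_
          exact ((Set.uIcc_of_le hab ▸ (hnormcont.pow 2)) :
            ContinuousOn _ (Set.uIcc a b)).intervalIntegrable
        have hlen : t - y ≤ τ := by
          have := hy.1
          rw [ha_def] at this
          linarith
        have hint_nn : 0 ≤ ∫ x in y..t, ‖f'' x‖ ^ 2 :=
          intervalIntegral.integral_nonneg hyt (fun x _ => sq_nonneg _)
        nlinarith
    calc ‖∫ u in t..y, f'' u‖ ≤ |∫ u in t..y, ‖f'' u‖| := h1
      _ ≤ Real.sqrt (τ * J) := by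
          rw [← Real.sqrt_sq_eq_abs]
          exact Real.sqrt_le_sqrt hsq
  -- decompose L
  have hI1 : IntervalIntegrable f' volume a t :=
    (hf'cont.mono (Set.uIcc_subset_Icc haS htS)).intervalIntegrable
  have hI2 : IntervalIntegrable f' volume t b :=
    (hf'cont.mono (Set.uIcc_subset_Icc htS hbS)).intervalIntegrable
  have hFTC1 : ∫ s in a..t, f' s = f t - f a := ftc f f' hf' hf'cont a haS t htS
  have hFTC2 : ∫ s in t..b, f' s = f b - f t := ftc f f' hf' hf'cont t htS b hbS
  have hdec1 : ∫ s in a..t, (f' s - f' t) = (f t - f a) - τ • f' t := by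
    rw [intervalIntegral.integral_sub hI1 _root_.intervalIntegrable_const,
      hFTC1, intervalIntegral.integral_const]
    congr 1
    rw [ha_def]; ring_nf
  have hdec2 : ∫ s in t..b, (f' s - f' t) = (f b - f t) - (τ/2) • f' t := by
    rw [intervalIntegral.integral_sub hI2 _root_.intervalIntegrable_const,
      hFTC2, intervalIntegral.integral_const]
    congr 1
    rw [hb_def]; ring_nf
  have hL : (3/2 : ℝ) • f t - (1/2 : ℝ) • f a - f b
      = (1/2 : ℝ) • (∫ s in a..t, (f' s - f' t)) - ∫ s in t..b, (f' s - f' t) := by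
    rw [hdec1, hdec2]
    module
  -- norm bounds on the two integrals
  set C := Real.sqrt (τ * J) with hC_def
  have hCnn : 0 ≤ C := Real.sqrt_nonneg _
  have hB1 : ‖∫ s in a..t, (f' s - f' t)‖ ≤ C * τ := by
    have := intervalIntegral.norm_integral_le_of_norm_le_const
      (a := a) (b := t) (C := C) (f := fun s => f' s - f' t) ?_
    · refine this.trans ?_
      have : |t - a| = τ := by rw [ha_def]; rw [abs_of_nonneg] <;> linarith
      rw [this]
    · intro x hx
      rw [Set.uIoc_of_le haT] at hx
      exact hkey x ⟨hx.1.le, hx.2.trans htB⟩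
  have hB2 : ‖∫ s in t..b, (f' s - f' t)‖ ≤ C * (τ/2) := by
    have := intervalIntegral.norm_integral_le_of_norm_le_const
      (a := t) (b := b) (C := C) (f := fun s => f' s - f' t) ?_
    · refine this.trans ?_
      have : |b - t| = τ/2 := by rw [hb_def]; rw [abs_of_nonneg] <;> linarith
      rw [this]
    · intro x hx
      rw [Set.uIoc_of_le htB] at hx
      exact hkey x ⟨haT.trans hx.1.le, hx.2⟩
  have hnorm : ‖(3/2 : ℝ) • f t - (1/2 : ℝ) • f a - f b‖ ≤ τ * C := by
    rw [hL]
    calc ‖(1/2 : ℝ) • (∫ s in a..t, (f' s - f' t)) - ∫ s in t..b, (f' s - f' t)‖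
        ≤ ‖(1/2 : ℝ) • (∫ s in a..t, (f' s - f' t))‖ + ‖∫ s in t..b, (f' s - f' t)‖ :=
          norm_sub_le _ _
      _ ≤ (1/2) * (C * τ) + C * (τ/2) := by
          rw [norm_smul]
          gcongr
          · rw [Real.norm_eq_abs]; rw [abs_of_nonneg] <;> norm_num
      _ = τ * C := by ring
  have hC2 : C ^ 2 = τ * J := Real.sq_sqrt (mul_nonneg hτ.le hJnn)
  calc ‖(3/2 : ℝ) • f t - (1/2 : ℝ) • f a - f b‖ ^ 2
      ≤ (τ * C) ^ 2 := by
        apply sq_le_sq' <;> nlinarith [norm_nonneg ((3/2 : ℝ) • f t - (1/2 : ℝ) • f a - f b), mul_nonneg hτ.le hCnn]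
    _ = τ ^ 2 * C ^ 2 := by ring
    _ = τ ^ 3 * J := by rw [hC2]; ring
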